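/- Let α be a finite alphabet with two distinct letters a and b. The language L₁ = {a^n·b : n ≥ 0} is a right-sided comet but not a left-sided comet, and its reversal L₂ = {b·a^n : n ≥ 0} is a left-sided comet but not a right-sided comet. -/

import Mathlib

open Language Computability

universe u

variable {α : Type}

/-- The n-fold repetition (power) of a word. -/
def wordPow (y : List α) : ℕ → List α
  | 0 => []
  | n + 1 => y ++ wordPow y n

/-- A star language: the Kleene star of some regular language. -/
def IsStarLang (L : Language α) : Prop :=
  ∃ H : Language α, H.IsRegular ∧ L = H∗

/-- A left-sided comet. -/
def IsLeftComet (L : Language α) : Prop :=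
  ∃ E G : Language α, E.IsRegular ∧ G.IsRegular ∧ G ≠ 0 ∧ G ≠ 1 ∧ L = E * G∗

/-- A right-sided comet. -/
def IsRightComet (L : Language α) : Prop :=
  ∃ G H : Language α, G.IsRegular ∧ H.IsRegular ∧ G ≠ 0 ∧ G ≠ 1 ∧ L = G∗ * H

/-- A two-sided comet. -/
def IsTwoComet (L : Language α) : Prop :=
  ∃ E G H : Language α, E.IsRegular ∧ G.IsRegular ∧ H.IsRegular ∧
    G ≠ 0 ∧ G ≠ 1 ∧ L = E * G∗ * H

/-- A regular expression is union-free if it is built from the atoms `0` (empty language)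
and single letters using only concatenation and Kleene star. -/
def RegularExpression.UnionFree : RegularExpression α → Prop
  | RegularExpression.zero => True
  | RegularExpression.epsilon => False
  | RegularExpression.char _ => True
  | RegularExpression.plus _ _ => False
  | RegularExpression.comp r s => r.UnionFree ∧ s.UnionFree
  | RegularExpression.star r => r.UnionFree

/-- A union-free language: the language of a union-free regular expression. -/
def IsUnionFree (L : Language α) : Prop :=
  ∃ r : RegularExpression α, r.UnionFree ∧ r.matches' = L

/-- A monoidal language. -/
def IsMonoidal (L : Language α) : Prop := L = (⊤ : Language α)

/-- The language of one-letter words with letters from `X`. -/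
def lettersLang (X : Set α) : Language α := {w : List α | ∃ a ∈ X, w = [a]}

/-- A combinational language: `⊤ · X` for a set `X` of one-letter words. -/
def IsCombinational (L : Language α) : Prop :=
  ∃ X : Set α, L = (⊤ : Language α) * lettersLang X

/-- A symmetric definite language: `E · ⊤ · H` with `E, H` regular. -/
def IsSymDef (L : Language α) : Prop :=
  ∃ E H : Language α, E.IsRegular ∧ H.IsRegular ∧ L = E * (⊤ : Language α) * H

/-- A nilpotent language: finite or with finite complement. -/
def IsNilpotentLang (L : Language α) : Prop := L.Finite ∨ (Lᶜ : Language α).Finite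

/-- A definite language: `A ∪ ⊤ · B` with `A, B` finite. -/
def IsDefinite (L : Language α) : Prop :=
  ∃ A B : Language α, A.Finite ∧ B.Finite ∧ L = A + (⊤ : Language α) * B  -- `+` of languages is union

/-- An ordered language: accepted by a DFA with linearly ordered state set
whose transition maps are all monotone. -/
def IsOrdered (L : Language α) : Prop :=
  ∃ (σ : Type) (_ : Fintype σ) (_ : LinearOrder σ) (M : DFA α σ),
    (∀ a : α, Monotone fun q => M.step q a) ∧ M.accepts = L

/-- The non-counting property. -/
def HasNonCounting (L : Language α) : Prop :=
  ∃ k : ℕ, 1 ≤ k ∧ ∀ x y z : List α,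
    (x ++ wordPow y k ++ z ∈ L ↔ x ++ wordPow y (k + 1) ++ z ∈ L)

/-- A non-counting (star-free) regular language. -/
def IsNonCounting (L : Language α) : Prop := L.IsRegular ∧ HasNonCounting L

/-- The power-separating property. -/
def HasPowerSep (L : Language α) : Prop :=
  ∃ m : ℕ, 1 ≤ m ∧ ∀ x : List α,
    (∀ n, m ≤ n → wordPow x n ∉ L) ∨ (∀ n, m ≤ n → wordPow x n ∈ L)

/-- A power-separating regular language. -/
def IsPowerSep (L : Language α) : Prop := L.IsRegular ∧ HasPowerSep L

/-- A suffix-closed (regular) language. -/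
def IsSuffixClosed (L : Language α) : Prop :=
  L.IsRegular ∧ ∀ x y : List α, x ++ y ∈ L → y ∈ L

/-- A circular (regular) language. -/
def IsCircular (L : Language α) : Prop :=
  L.IsRegular ∧ ∀ u v : List α, u ++ v ∈ L → v ++ u ∈ L

/-- A commutative (regular) language. -/
def IsCommutative (L : Language α) : Prop :=
  L.IsRegular ∧ ∀ w ∈ L, ∀ v : List α, w.Perm v → v ∈ L

/-- The reversal of a language. -/
def Reversal (L : Language α) : Language α := {w : List α | ∃ v ∈ L, w = v.reverse}

/-- Two families of languages are incomparable if neither is contained in the other. -/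
def Incomparable (P Q : Language α → Prop) : Prop :=
  (∃ L : Language α, P L ∧ ¬ Q L) ∧ (∃ L : Language α, Q L ∧ ¬ P L)

/-- A finite language. -/
def IsFiniteLang (L : Language α) : Prop := L.Finite

/-- The language `{aⁿb : n ≥ 0}`. -/
def anb (a b : α) : Language α := {w : List α | ∃ n : ℕ, w = List.replicate n a ++ [b]}

/-- The language `{b·aⁿ : n ≥ 0}`, the reversal of `anb`. -/
def ban (a b : α) : Language α := {w : List α | ∃ n : ℕ, w = b :: List.replicate n a}

/-- `{aⁿb}` is a right-sided but not a left-sided comet; its reversal `{baⁿ}`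
is a left-sided but not a right-sided comet. -/

lemma isRegular_singleton_char (c : α) : Language.IsRegular ({[c]} : Language α) := by
  classical
  refine ⟨Fin 3, inferInstance,
    ⟨fun q x => if q = 0 ∧ x = c then 1 else 2, 0, {1}⟩, ?_⟩
  have key : ∀ (l : List α) (q : Fin 3), q ≠ 0 →
      DFA.evalFrom ⟨fun q x => if q = 0 ∧ x = c then 1 else 2, (0 : Fin 3), {1}⟩ q l
        = if l = [] then q else 2 := by
    intro l
    induction l with
    | nil => intro q _; simp [DFA.evalFrom]
    | cons x l ih =>
      intro q hq
      have hstep : (if q = 0 ∧ x = c then (1 : Fin 3) else 2) = 2 := by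
        simp [hq]
      simp only [DFA.evalFrom, List.foldl_cons] at ih ⊢
      rw [hstep, ih 2 (by decide)]
      by_cases hl : l = [] <;> simp [hl]
  ext w
  rw [DFA.mem_accepts]
  cases w with
  | nil =>
      simp only [DFA.eval, DFA.evalFrom, List.foldl_nil]
      constructor
      · intro h; exact absurd h (by decide)
      · intro h; exact absurd (show ([] : List α) = [c] from h) (by simp)
  | cons x l =>
    have : DFA.evalFrom ⟨fun q x => if q = 0 ∧ x = c then 1 else 2, (0 : Fin 3), {1}⟩ 0 (x :: l)
        = if x = c then (if l = [] then (1 : Fin 3) else 2) else (if l = [] then 2 else 2) := by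
      simp only [DFA.evalFrom, List.foldl_cons]
      by_cases hx : x = c
      · simpa [hx, DFA.evalFrom] using key l 1 (by decide)
      · simpa [hx, DFA.evalFrom] using key l 2 (by decide)
    rw [show DFA.eval ⟨fun q x => if q = 0 ∧ x = c then 1 else 2, (0 : Fin 3), {1}⟩ (x :: l)
        = DFA.evalFrom ⟨fun q x => if q = 0 ∧ x = c then 1 else 2, (0 : Fin 3), {1}⟩ 0 (x :: l)
        from rfl, this]
    by_cases hx : x = c <;> by_cases hl : l = [] <;>
      simp_all [Set.mem_singleton_iff, List.cons_eq_cons] 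
    · exact Set.mem_singleton _
    · exact fun h => hl (List.cons_eq_cons.mp (Set.mem_singleton_iff.mp h)).2
    · exact fun h => hx (List.cons_eq_cons.mp (Set.mem_singleton_iff.mp h)).1
    · exact fun h => hx (List.cons_eq_cons.mp (Set.mem_singleton_iff.mp h)).1

lemma flatten_replicate_singleton (a : α) (n : ℕ) :
    (List.replicate n [a]).flatten = List.replicate n a := by
  induction n with
  | zero => simp
  | succ n ih => simp [List.replicate_succ, ih]

lemma kstar_char (a : α) :
    ({[a]} : Language α)∗ = {w : List α | ∃ n : ℕ, w = List.replicate n a} := by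
  ext w
  rw [Language.mem_kstar]
  constructor
  · rintro ⟨L, rfl, hL⟩
    refine ⟨L.length, ?_⟩
    induction L with
    | nil => simp
    | cons x L ih =>
      have hx : x = [a] := hL x (by simp)
      rw [List.flatten_cons, hx, ih (fun y hy => hL y (by simp [hy]))]
      simp [List.replicate_succ]
  · rintro ⟨n, rfl⟩
    exact ⟨List.replicate n [a], (flatten_replicate_singleton a n).symm,
      fun y hy => show y = [a] from List.eq_of_mem_replicate hy⟩

lemma anb_eq (a b : α) : anb a b = ({[a]} : Language α)∗ * ({[b]} : Language α) := by
  ext w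
  rw [Language.mem_mul]
  constructor
  · rintro ⟨n, rfl⟩
    exact ⟨List.replicate n a, by rw [kstar_char]; exact ⟨n, rfl⟩, [b], rfl, rfl⟩
  · rintro ⟨u, hu, v, hv, rfl⟩
    rw [kstar_char] at hu
    obtain ⟨n, rfl⟩ := hu
    exact ⟨n, by rw [Set.mem_singleton_iff.mp hv]⟩

lemma ban_eq (a b : α) : ban a b = ({[b]} : Language α) * ({[a]} : Language α)∗ := by
  ext w
  rw [Language.mem_mul]
  constructor
  · rintro ⟨n, rfl⟩
    exact ⟨[b], rfl, List.replicate n a, by rw [kstar_char]; exact ⟨n, rfl⟩, rfl⟩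
  · rintro ⟨u, hu, v, hv, rfl⟩
    rw [kstar_char] at hv
    obtain ⟨n, rfl⟩ := hv
    exact ⟨n, by rw [Set.mem_singleton_iff.mp hu]; rfl⟩

lemma singleton_char_ne_zero (c : α) : ({[c]} : Language α) ≠ 0 := by
  intro h
  have : [c] ∈ (0 : Language α) := h ▸ Set.mem_singleton _
  exact this

lemma singleton_char_ne_one (c : α) : ({[c]} : Language α) ≠ 1 := by
  intro h
  have : [c] ∈ (1 : Language α) := h ▸ Set.mem_singleton _
  exact absurd ((Language.mem_one _).mp this) (by simp)

lemma exists_ne_nil_of_ne (G : Language α) (h0 : G ≠ 0) (h1 : G ≠ 1) :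
    ∃ g ∈ G, g ≠ [] := by
  by_contra h
  push_neg at h
  apply h1
  ext x
  rw [Language.mem_one]
  constructor
  · intro hx; exact h x hx
  · rintro rfl
    obtain ⟨y, hy⟩ : ∃ y, y ∈ G := by
      by_contra hn
      push_neg at hn
      exact h0 (Set.eq_empty_iff_forall_notMem.mpr hn)
    exact (h y hy) ▸ hy

lemma append_mem_kstar_right {G : Language α} {s g : List α}
    (hs : s ∈ G∗) (hg : g ∈ G) : s ++ g ∈ G∗ := by
  rw [Language.mem_kstar] at hs ⊢
  obtain ⟨L, rfl, hL⟩ := hs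
  refine ⟨L ++ [g], by simp, fun y hy => ?_⟩
  rcases List.mem_append.mp hy with h | h
  · exact hL y h
  · simpa using (List.mem_singleton.mp h) ▸ hg

lemma append_mem_kstar_left {G : Language α} {s g : List α}
    (hs : s ∈ G∗) (hg : g ∈ G) : g ++ s ∈ G∗ := by
  rw [Language.mem_kstar] at hs ⊢
  obtain ⟨L, rfl, hL⟩ := hs
  refine ⟨g :: L, by simp, fun y hy => ?_⟩
  rcases List.mem_cons.mp hy with h | h
  · exact h ▸ hg
  · exact hL y h

theorem anb_rightComet_not_leftComet [Fintype α] (a b : α) (hab : a ≠ b) :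
    IsRightComet (anb a b) ∧ ¬ IsLeftComet (anb a b) ∧
    IsLeftComet (ban a b) ∧ ¬ IsRightComet (ban a b) := by
  classical
  have hra := isRegular_singleton_char (α := α) a
  have hrb := isRegular_singleton_char (α := α) b
  refine ⟨⟨{[a]}, {[b]}, hra, hrb, singleton_char_ne_zero a, singleton_char_ne_one a,
      anb_eq a b⟩, ?_, ⟨{[b]}, {[a]}, hrb, hra, singleton_char_ne_zero a,
      singleton_char_ne_one a, ban_eq a b⟩, ?_⟩
  · rintro ⟨E, G, -, -, hG0, hG1, hL⟩
    obtain ⟨g, hgG, hgne⟩ := exists_ne_nil_of_ne G hG0 hG1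
    have hb : [b] ∈ anb a b := ⟨0, rfl⟩
    rw [hL, Language.mem_mul] at hb
    obtain ⟨e, he, s, hs, hes⟩ := hb
    have hmem : e ++ (s ++ g) ∈ anb a b := by
      rw [hL]
      exact Language.append_mem_mul he (append_mem_kstar_right hs hgG)
    rw [← List.append_assoc, hes] at hmem
    obtain ⟨n, hn⟩ := hmem
    -- count of b
    have hcount : ([b] ++ g).count b = (List.replicate n a ++ [b]).count b := by rw [hn]
    simp [List.count_append, List.count_replicate, hab, hab.symm] at hcount
    -- g ends with b
    have hlast : g.getLast? = some b := by
      have h1 : ([b] ++ g).getLast? = g.getLast? := List.getLast?_append_of_ne_nil _ hgne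
      have h2 : (List.replicate n a ++ [b]).getLast? = some b := by
        rw [List.getLast?_append_of_ne_nil _ (by simp : ([b] : List α) ≠ [])]
        rfl
      rw [← h1, hn, h2]
    have hbin : b ∈ g := List.mem_of_getLast? hlast
    exact (List.count_eq_zero.mp hcount) hbin
  · rintro ⟨G, H, -, -, hG0, hG1, hL⟩
    obtain ⟨g, hgG, hgne⟩ := exists_ne_nil_of_ne G hG0 hG1
    have hb : [b] ∈ ban a b := ⟨0, rfl⟩
    rw [hL, Language.mem_mul] at hb
    obtain ⟨s, hs, h, hh, hsh⟩ := hb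
    have hmem : (g ++ s) ++ h ∈ ban a b := by
      rw [hL]
      exact Language.append_mem_mul (append_mem_kstar_left hs hgG) hh
    rw [List.append_assoc, hsh] at hmem
    obtain ⟨n, hn⟩ := hmem
    have hcount : (g ++ [b]).count b = (b :: List.replicate n a).count b := by rw [hn]
    simp [List.count_append, List.count_cons, List.count_replicate, hab, hab.symm] at hcount
    have hhead : g.head? = some b := by
      have h1 : (g ++ [b]).head? = g.head? := List.head?_append_of_ne_nil _ hgne
      rw [← h1, hn]
      rfl
    have hbin : b ∈ g := by
      cases g with
      | nil => exact absurd rfl hgne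
      | cons x t =>
        have : x = b := by simpa using hhead
        simp [this]
    exact (List.count_eq_zero.mp hcount) hbin
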